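/- Conversely to the product-form characterization: suppose P and P' are two probability densities on ℝ^{d×(k+1)}, both of the form Q_T · ∏_{i=0}^k Ψ_i(x_i) and Q_T · ∏_{i=0}^k Ψ'_i(x_i) respectively for nonnegative measurable potentials, and both have the same marginals ρ_{t_0}, ..., ρ_{t_k}. If additionally both are finite-entropy relative to Q_T, then P = P' almost everywhere. -/

import Mathlib

open MeasureTheory ProbabilityTheory
open scoped ENNReal NNReal Classical

/-- Kullback–Leibler divergence `D_KL(μ | ν) = ∫ log(dμ/dν) dμ` when `μ ≪ ν` (and the
integrand is integrable), and `+∞` otherwise. -/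

noncomputable def klDiv {α : Type*} [MeasurableSpace α] (μ ν : Measure α) : ℝ≥0∞ :=
  if μ ≪ ν ∧ Integrable (fun x => Real.log (μ.rnDeriv ν x).toReal) μ
  then ENNReal.ofReal (∫ x, Real.log (μ.rnDeriv ν x).toReal ∂μ)
  else ⊤

section Core

variable {Ω : Type*} [MeasurableSpace Ω]

/-- From equality of upper-tail measures, deduce equality of lower-tail measures. -/
lemma tail_lt_eq {P P' : Measure Ω} [IsProbabilityMeasure P] [IsProbabilityMeasure P']
    {ξ : Ω → ℝ} (hξ : Measurable ξ)
    (h : ∀ c : ℝ, P' {ω | c < ξ ω} = P {ω | c < ξ ω}) :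
    ∀ c : ℝ, P' {ω | ξ ω < c} = P {ω | ξ ω < c} := by
  intro c
  have hseteq : {ω | c ≤ ξ ω} = ⋂ n : ℕ, {ω | c - 1/(n+1) < ξ ω} := by
    ext ω
    simp only [Set.mem_setOf_eq, Set.mem_iInter]
    constructor
    · intro hle n
      have : (0:ℝ) < 1/(n+1) := by positivity
      linarith
    · intro hall
      by_contra hlt
      push_neg at hlt
      obtain ⟨n, hn⟩ := exists_nat_one_div_lt (show (0:ℝ) < c - ξ ω by linarith)
      have := hall n
      linarith
  have hanti : Antitone (fun n : ℕ => {ω | c - 1/(n+1) < ξ ω}) := by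
    intro m n hmn ω hω
    simp only [Set.mem_setOf_eq] at hω ⊢
    have h1 : (1:ℝ)/(n+1) ≤ 1/(m+1) := by
      apply one_div_le_one_div_of_le
      · positivity
      · exact_mod_cast by exact_mod_cast add_le_add_left (Nat.cast_le.2 hmn) 1
    linarith
  have hmeas : ∀ n : ℕ, MeasurableSet {ω | c - 1/(n+1) < ξ ω} :=
    fun n => measurableSet_lt measurable_const hξ
  have hP : P {ω | c ≤ ξ ω} = ⨅ n : ℕ, P {ω | c - 1/(n+1) < ξ ω} := by
    rw [hseteq]
    exact Directed.measure_iInter (fun n => (hmeas n).nullMeasurableSet)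
      (hanti.directed_ge) ⟨0, measure_ne_top _ _⟩
  have hP' : P' {ω | c ≤ ξ ω} = ⨅ n : ℕ, P' {ω | c - 1/(n+1) < ξ ω} := by
    rw [hseteq]
    exact Directed.measure_iInter (fun n => (hmeas n).nullMeasurableSet)
      (hanti.directed_ge) ⟨0, measure_ne_top _ _⟩
  have hge : P' {ω | c ≤ ξ ω} = P {ω | c ≤ ξ ω} := by
    rw [hP, hP']
    exact iInf_congr (fun n => h _)
  have hcompl : {ω | ξ ω < c} = {ω | c ≤ ξ ω}ᶜ := by
    ext ω; simp [not_le]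
  have hmeas2 : MeasurableSet {ω | c ≤ ξ ω} := measurableSet_le measurable_const hξ
  rw [hcompl, measure_compl hmeas2 (measure_ne_top _ _),
    measure_compl hmeas2 (measure_ne_top _ _), measure_univ, measure_univ, hge]

/-- Half of the core lemma: the set where `ξ + η > 0` is `P`-null. -/
lemma half_core {P P' : Measure Ω} [IsProbabilityMeasure P] [IsProbabilityMeasure P']
    {ξ η : Ω → ℝ} (hξ : Measurable ξ) (hη : Measurable η)
    (hd : P' = P.withDensity fun ω => ENNReal.ofReal (Real.exp (ξ ω + η ω)))
    (hmξ : ∀ c : ℝ, P' {ω | c < ξ ω} = P {ω | c < ξ ω})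
    (hmη : ∀ c : ℝ, P' {ω | c < η ω} = P {ω | c < η ω}) :
    P {ω | 0 < ξ ω + η ω} = 0 := by
  set w : Ω → ℝ≥0∞ := fun ω => ENNReal.ofReal (Real.exp (ξ ω + η ω)) with hw
  have hwmeas : Measurable w := ((hξ.add hη).exp).ennreal_ofReal
  -- main step : for every c and ε > 0, P (O_c ∩ {ε ≤ ξ+η}) = 0
  have key : ∀ c : ℝ, ∀ ε : ℝ, 0 < ε →
      P ({ω | c < ξ ω} ∩ {ω | -c < η ω} ∩ {ω | ε ≤ ξ ω + η ω}) = 0 := by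
    intro c ε hε
    set A := {ω | c < ξ ω} with hA
    set B := {ω | -c < η ω} with hB
    have hAm : MeasurableSet A := measurableSet_lt measurable_const hξ
    have hBm : MeasurableSet B := measurableSet_lt measurable_const hη
    have hOm : MeasurableSet (A ∩ B) := hAm.inter hBm
    -- P'(Vᶜ) ≤ P(Vᶜ)
    have hVc : P' ((A ∪ B)ᶜ) ≤ P ((A ∪ B)ᶜ) := by
      rw [hd, withDensity_apply _ (hAm.union hBm).compl]
      calc ∫⁻ ω in (A ∪ B)ᶜ, w ω ∂P
          ≤ ∫⁻ _ω in (A ∪ B)ᶜ, 1 ∂P := by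
            refine setLIntegral_mono measurable_const fun ω hω => ?_
            simp only [Set.compl_union, Set.mem_inter_iff, Set.mem_compl_iff, hA, hB,
              Set.mem_setOf_eq, not_lt] at hω
            have : ξ ω + η ω ≤ 0 := by linarith [hω.1, hω.2]
            simpa [hw] using ENNReal.ofReal_le_one.2 (Real.exp_le_one_iff.2 this)
        _ = P ((A ∪ B)ᶜ) := by simp
    -- hence P'(V) ≥ P(V)
    have hV : P (A ∪ B) ≤ P' (A ∪ B) := by
      have e1 : P (A ∪ B) = 1 - P ((A ∪ B)ᶜ) := by
        have := prob_compl_eq_one_sub (μ := P) (hAm.union hBm).compl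
        rwa [compl_compl] at this
      have e2 : P' (A ∪ B) = 1 - P' ((A ∪ B)ᶜ) := by
        have := prob_compl_eq_one_sub (μ := P') (hAm.union hBm).compl
        rwa [compl_compl] at this
      rw [e1, e2]
      exact tsub_le_tsub_left hVc 1
    -- inclusion-exclusion: P'(V) + P'(O) = P(V) + P(O) hence P'(O) ≤ P(O)
    have hIE : P' (A ∪ B) + P' (A ∩ B) = P (A ∪ B) + P (A ∩ B) := by
      rw [measure_union_add_inter (μ := P') A hBm, measure_union_add_inter (μ := P) A hBm,
        hmξ c, hmη (-c)]
    have hOle : P' (A ∩ B) ≤ P (A ∩ B) := by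
      have h3 : P (A ∪ B) + P' (A ∩ B) ≤ P (A ∪ B) + P (A ∩ B) := by
        calc P (A ∪ B) + P' (A ∩ B) ≤ P' (A ∪ B) + P' (A ∩ B) := by gcongr
          _ = P (A ∪ B) + P (A ∩ B) := hIE
      exact (ENNReal.add_le_add_iff_left (measure_ne_top _ _)).1 h3
    -- on A ∩ B the density is ≥ 1, on the ε-part it is ≥ exp ε
    set S := A ∩ B ∩ {ω | ε ≤ ξ ω + η ω} with hS
    have hSm : MeasurableSet S := hOm.inter (measurableSet_le measurable_const (hξ.add hη))
    have hsub : S ⊆ A ∩ B := Set.inter_subset_left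
    have hsplit : P' (A ∩ B) = ∫⁻ ω in S, w ω ∂P + ∫⁻ ω in (A ∩ B) \ S, w ω ∂P := by
      rw [hd, withDensity_apply _ hOm, ← Set.union_diff_cancel hsub,
        lintegral_union (hOm.diff hSm) disjoint_sdiff_self_right, Set.union_diff_cancel hsub]
    have hlow1 : ENNReal.ofReal (Real.exp ε) * P S ≤ ∫⁻ ω in S, w ω ∂P := by
      calc ENNReal.ofReal (Real.exp ε) * P S = ∫⁻ _ω in S, ENNReal.ofReal (Real.exp ε) ∂P := by
            simp [mul_comm]
        _ ≤ ∫⁻ ω in S, w ω ∂P := by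
            refine setLIntegral_mono hwmeas fun ω hω => ?_
            have : ε ≤ ξ ω + η ω := hω.2
            exact ENNReal.ofReal_le_ofReal (Real.exp_le_exp.2 this)
    have hlow2 : P ((A ∩ B) \ S) ≤ ∫⁻ ω in (A ∩ B) \ S, w ω ∂P := by
      calc P ((A ∩ B) \ S) = ∫⁻ _ω in (A ∩ B) \ S, 1 ∂P := by simp
        _ ≤ ∫⁻ ω in (A ∩ B) \ S, w ω ∂P := by
            refine setLIntegral_mono hwmeas fun ω hω => ?_
            have h1 : c < ξ ω := hω.1.1
            have h2 : -c < η ω := hω.1.2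
            have : (0:ℝ) ≤ ξ ω + η ω := by linarith
            rw [hw]
            exact ENNReal.one_le_ofReal.2 (Real.one_le_exp this)
    -- combine
    have hcontr : ENNReal.ofReal (Real.exp ε) * P S + P ((A ∩ B) \ S) ≤ P S + P ((A ∩ B) \ S) := by
      calc ENNReal.ofReal (Real.exp ε) * P S + P ((A ∩ B) \ S)
          ≤ ∫⁻ ω in S, w ω ∂P + ∫⁻ ω in (A ∩ B) \ S, w ω ∂P := by gcongr
        _ = P' (A ∩ B) := hsplit.symm
        _ ≤ P (A ∩ B) := hOle
        _ = P S + P ((A ∩ B) \ S) := by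
            rw [← measure_union disjoint_sdiff_self_right (hOm.diff hSm),
              Set.union_diff_cancel hsub]
    have hfin : P ((A ∩ B) \ S) ≠ ⊤ := measure_ne_top _ _
    have h4 : ENNReal.ofReal (Real.exp ε) * P S ≤ P S :=
      (ENNReal.add_le_add_iff_right hfin).1 hcontr
    by_contra hne
    have hpos : 0 < P S := pos_iff_ne_zero.2 hne
    have hgt : (1:ℝ≥0∞) < ENNReal.ofReal (Real.exp ε) := by
      rw [show (1:ℝ≥0∞) = ENNReal.ofReal 1 by simp]
      exact (ENNReal.ofReal_lt_ofReal_iff_of_nonneg (by norm_num)).2 (Real.one_lt_exp_iff.2 hε)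
    have hlt : P S < ENNReal.ofReal (Real.exp ε) * P S := by
      conv_lhs => rw [← one_mul (P S)]
      exact ENNReal.mul_lt_mul_left hne (measure_ne_top _ _) hgt
    exact absurd h4 (not_le.2 hlt)
  -- cover {0 < ξ + η} by countably many such sets
  have hcover : {ω | 0 < ξ ω + η ω} ⊆
      ⋃ c : ℚ, ⋃ m : ℕ, ({ω | (c:ℝ) < ξ ω} ∩ {ω | -(c:ℝ) < η ω} ∩ {ω | 1/(m+1) ≤ ξ ω + η ω}) := by
    intro ω hω
    simp only [Set.mem_setOf_eq] at hω
    obtain ⟨c, hc1, hc2⟩ := exists_rat_btwn (show -η ω < ξ ω by linarith)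
    obtain ⟨m, hm⟩ := exists_nat_one_div_lt hω
    simp only [Set.mem_iUnion, Set.mem_inter_iff, Set.mem_setOf_eq]
    refine ⟨c, m, ⟨hc2, by linarith⟩, le_of_lt (by exact_mod_cast hm)⟩
  refine measure_mono_null hcover ?_
  refine measure_iUnion_null fun c => measure_iUnion_null fun m => ?_
  exact key c (1/(m+1)) (by positivity)

/-- The core uniqueness lemma. -/
lemma core_lemma {P P' : Measure Ω} [IsProbabilityMeasure P] [IsProbabilityMeasure P']
    {ξ η : Ω → ℝ} (hξ : Measurable ξ) (hη : Measurable η)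
    (hd : P' = P.withDensity fun ω => ENNReal.ofReal (Real.exp (ξ ω + η ω)))
    (hmξ : ∀ c : ℝ, P' {ω | c < ξ ω} = P {ω | c < ξ ω})
    (hmη : ∀ c : ℝ, P' {ω | c < η ω} = P {ω | c < η ω}) :
    P = P' := by
  have h1 : P {ω | 0 < ξ ω + η ω} = 0 := half_core hξ hη hd hmξ hmη
  -- dual direction
  have hd2 : P = P'.withDensity fun ω => ENNReal.ofReal (Real.exp (-ξ ω + -η ω)) := by
    rw [hd, ← withDensity_mul (f := fun ω => ENNReal.ofReal (Real.exp (ξ ω + η ω)))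
      (g := fun ω => ENNReal.ofReal (Real.exp (-ξ ω + -η ω))) _ (((hξ.add hη).exp).ennreal_ofReal)
      (((hξ.neg.add hη.neg).exp).ennreal_ofReal)]
    have heq : ((fun ω => ENNReal.ofReal (Real.exp (ξ ω + η ω))) *
        (fun ω => ENNReal.ofReal (Real.exp (-ξ ω + -η ω)))) = fun _ω => (1:ℝ≥0∞) := by
      funext ω
      show ENNReal.ofReal (Real.exp (ξ ω + η ω)) * ENNReal.ofReal (Real.exp (-ξ ω + -η ω)) = 1
      rw [← ENNReal.ofReal_mul (Real.exp_nonneg _), ← Real.exp_add,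
        show ξ ω + η ω + (-ξ ω + -η ω) = 0 by ring, Real.exp_zero, ENNReal.ofReal_one]
    rw [heq]
    exact (withDensity_one (μ := P)).symm
  have hmξ2 : ∀ c : ℝ, P {ω | c < -ξ ω} = P' {ω | c < -ξ ω} := by
    intro c
    have : {ω | c < -ξ ω} = {ω | ξ ω < -c} := by ext ω; simp [Set.mem_setOf_eq]; constructor <;> intro <;> linarith
    rw [this, tail_lt_eq hξ hmξ]
  have hmη2 : ∀ c : ℝ, P {ω | c < -η ω} = P' {ω | c < -η ω} := by
    intro c
    have : {ω | c < -η ω} = {ω | η ω < -c} := by ext ω; simp [Set.mem_setOf_eq]; constructor <;> intro <;> linarith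
    rw [this, tail_lt_eq hη hmη]
  have h2 : P' {ω | 0 < -ξ ω + -η ω} = 0 := half_core hξ.neg hη.neg hd2 hmξ2 hmη2
  -- transfer h2 to P
  have h2' : P {ω | ξ ω + η ω < 0} = 0 := by
    have hset : {ω | ξ ω + η ω < 0} = {ω | 0 < -ξ ω + -η ω} := by
      ext ω; simp only [Set.mem_setOf_eq]; constructor <;> intro <;> linarith
    have hm : MeasurableSet {ω | 0 < -ξ ω + -η ω} :=
      measurableSet_lt measurable_const (hξ.neg.add hη.neg)
    rw [hset, hd2, withDensity_apply _ hm, setLIntegral_measure_zero _ _ h2]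
  -- hence ξ + η = 0 a.e. and the density is 1 a.e.
  have h3 : ∀ᵐ ω ∂P, ξ ω + η ω = 0 := by
    have hu : P ({ω | 0 < ξ ω + η ω} ∪ {ω | ξ ω + η ω < 0}) = 0 := measure_union_null h1 h2'
    rw [ae_iff]
    refine measure_mono_null (fun ω hω => ?_) hu
    simp only [Set.mem_setOf_eq] at hω
    rcases lt_or_gt_of_ne hω with h | h
    · exact Or.inr h
    · exact Or.inl h
  have hae : (fun ω => ENNReal.ofReal (Real.exp (ξ ω + η ω))) =ᵐ[P] fun _ω => (1:ℝ≥0∞) := by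
    filter_upwards [h3] with ω hω
    simp [hω]
  rw [hd, withDensity_congr_ae hae]
  exact (withDensity_one (μ := P)).symm

end Core

section Collapse

variable {α γ : Type*} [MeasurableSpace α] [MeasurableSpace γ]

/-- Mapping a `withDensity` measure through a measurable equivalence. -/
lemma withDensity_map_equiv (μ : Measure α) (e : α ≃ᵐ γ) {D : α → ℝ≥0∞} (hD : Measurable D) :
    (μ.withDensity D).map e = (μ.map e).withDensity (D ∘ e.symm) := by
  ext s hs
  rw [Measure.map_apply e.measurable hs, withDensity_apply _ (e.measurable hs),
    withDensity_apply _ hs, setLIntegral_map hs (hD.comp e.symm.measurable) e.measurable]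
  refine setLIntegral_congr_fun (e.measurable hs) (fun x _ => ?_)
  simp

/-- Collapsing the first factor of a product measure with density. -/
lemma snd_collapse (μ : Measure α) (ν : Measure γ) [SFinite μ] [SFinite ν]
    {F : α × γ → ℝ≥0∞} (hF : Measurable F) :
    ((μ.prod ν).withDensity F).map Prod.snd
      = ν.withDensity (fun y => ∫⁻ x, F (x, y) ∂μ) := by
  ext s hs
  rw [Measure.map_apply measurable_snd hs, withDensity_apply _ (measurable_snd hs),
    withDensity_apply _ hs]
  rw [← lintegral_indicator (measurable_snd hs), lintegral_prod_symm _
    ((hF.indicator (measurable_snd hs)).aemeasurable)]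
  rw [← lintegral_indicator hs]
  congr 1
  funext y
  by_cases hy : y ∈ s
  · rw [Set.indicator_of_mem hy]
    congr 1
    funext x
    rw [Set.indicator_of_mem (by simpa using hy)]
  · rw [Set.indicator_of_notMem hy]
    have : ∀ x : α, (Prod.snd ⁻¹' s).indicator F (x, y) = 0 := fun x =>
      Set.indicator_of_notMem (by simpa using hy) _
    simp [this]

end Collapse

section PiCollapse

variable {β : Type*} [MeasureSpace β] [SigmaFinite (volume : Measure β)] {n : ℕ}

/-- The restriction map dropping coordinate `0`. -/
def res (n : ℕ) (β : Type*) : (Fin (n + 2) → β) → (Fin (n + 1) → β) := fun x j => x j.succ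

lemma measurable_res : Measurable (res n β) :=
  measurable_pi_lambda _ fun j => measurable_pi_apply _

lemma map_res_withDensity {D : (Fin (n + 2) → β) → ℝ≥0∞} (hD : Measurable D) :
    ((volume : Measure (Fin (n + 2) → β)).withDensity D).map (res n β)
      = (volume : Measure (Fin (n + 1) → β)).withDensity
          (fun y => ∫⁻ t, D (Fin.cons t y)) := by
  set e := MeasurableEquiv.piFinSuccAbove (fun _ : Fin (n + 2) => β) 0 with he
  have hmp : MeasurePreserving e (volume : Measure (Fin (n + 2) → β))
      ((volume : Measure β).prod (volume : Measure (Fin (n + 1) → β))) := by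
    have h := measurePreserving_piFinSuccAbove (fun _ : Fin (n + 2) => (volume : Measure β)) 0
    simp only [← volume_pi] at h
    exact h
  have hres : res n β = Prod.snd ∘ e := by
    funext x j
    show x j.succ = x ((0 : Fin (n+2)).succAbove j)
    rw [Fin.succAbove_zero]
  rw [hres, ← Measure.map_map measurable_snd e.measurable,
    withDensity_map_equiv _ e hD, hmp.map_eq,
    snd_collapse _ _ (hD.comp e.symm.measurable)]
  congr 1
  funext y
  congr 1
  funext t
  show D (e.symm (t, y)) = D (Fin.cons t y)
  congr 1
  rw [he]
  simp only [MeasurableEquiv.piFinSuccAbove_symm_apply]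
  exact Fin.insertNth_zero' t y
end PiCollapse

section MarkovCollapse

variable {β : Type*} [MeasureSpace β] [SigmaFinite (volume : Measure β)] {n : ℕ}

lemma markov_density_measurable (ρ : β → ℝ≥0∞) (q : Fin (n + 1) → β → β → ℝ≥0∞)
    (Φ : Fin (n + 2) → β → ℝ≥0∞) (hρ : Measurable ρ)
    (hq : ∀ i, Measurable (Function.uncurry (q i))) (hΦ : ∀ i, Measurable (Φ i)) :
    Measurable (fun x : Fin (n + 2) → β =>
      (ρ (x 0) * ∏ i : Fin (n + 1), q i (x i.castSucc) (x i.succ)) * ∏ i, Φ i (x i)) := by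
  refine Measurable.mul (Measurable.mul ?_ ?_) ?_
  · exact hρ.comp (measurable_pi_apply 0)
  · refine Finset.measurable_prod _ fun i _ => ?_
    show Measurable (Function.uncurry (q i) ∘ fun x : Fin (n + 2) → β => (x i.castSucc, x i.succ))
    exact (hq i).comp ((measurable_pi_apply _).prodMk (measurable_pi_apply _))
  · refine Finset.measurable_prod _ fun i _ => ?_
    show Measurable (Φ i ∘ fun x : Fin (n + 2) → β => x i)
    exact (hΦ i).comp (measurable_pi_apply _)

lemma collapse_density (ρ : β → ℝ≥0∞) (q : Fin (n + 1) → β → β → ℝ≥0∞)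
    (Φ : Fin (n + 2) → β → ℝ≥0∞) (hρ : Measurable ρ)
    (hq : ∀ i, Measurable (Function.uncurry (q i))) (hΦ : ∀ i, Measurable (Φ i)) :
    ((volume : Measure (Fin (n + 2) → β)).withDensity
        (fun x => (ρ (x 0) * ∏ i : Fin (n + 1), q i (x i.castSucc) (x i.succ))
          * ∏ i, Φ i (x i))).map (res n β)
      = (volume : Measure (Fin (n + 1) → β)).withDensity
        (fun y => (((∫⁻ t, ρ t * Φ 0 t * q 0 t (y 0)))
            * ∏ i : Fin n, q i.succ (y i.castSucc) (y i.succ))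
          * ∏ i : Fin (n + 1), Φ i.succ (y i)) := by
  rw [map_res_withDensity (markov_density_measurable ρ q Φ hρ hq hΦ)]
  congr 1
  funext y
  have key : (∫⁻ t, (ρ ((Fin.cons t y : Fin (n + 2) → β) 0)
        * ∏ i : Fin (n + 1), q i ((Fin.cons t y : Fin (n + 2) → β) i.castSucc)
            ((Fin.cons t y : Fin (n + 2) → β) i.succ))
        * ∏ i, Φ i ((Fin.cons t y : Fin (n + 2) → β) i))
      = ((∫⁻ t, ρ t * Φ 0 t * q 0 t (y 0))
            * ∏ i : Fin n, q i.succ (y i.castSucc) (y i.succ))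
          * ∏ i : Fin (n + 1), Φ i.succ (y i) := by
    have hpt : ∀ t : β, (ρ ((Fin.cons t y : Fin (n + 2) → β) 0)
        * ∏ i : Fin (n + 1), q i ((Fin.cons t y : Fin (n + 2) → β) i.castSucc)
            ((Fin.cons t y : Fin (n + 2) → β) i.succ))
        * ∏ i, Φ i ((Fin.cons t y : Fin (n + 2) → β) i)
        = (ρ t * Φ 0 t * q 0 t (y 0))
          * ((∏ i : Fin n, q i.succ (y i.castSucc) (y i.succ))
            * ∏ i : Fin (n + 1), Φ i.succ (y i)) := by
      intro t
      have e1 : (Fin.cons t y : Fin (n + 2) → β) 0 = t := rfl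
      have e2 : (∏ i : Fin (n + 1), q i ((Fin.cons t y : Fin (n + 2) → β) i.castSucc)
            ((Fin.cons t y : Fin (n + 2) → β) i.succ))
          = q 0 t (y 0) * ∏ i : Fin n, q i.succ (y i.castSucc) (y i.succ) := by
        rw [Fin.prod_univ_succ]
        refine congrArg₂ _ ?_ (Finset.prod_congr rfl fun i _ => ?_)
        · rw [Fin.castSucc_zero, Fin.cons_zero, Fin.cons_succ]
        · rw [← Fin.succ_castSucc, Fin.cons_succ, Fin.cons_succ]
      have e3 : (∏ i, Φ i ((Fin.cons t y : Fin (n + 2) → β) i))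
          = Φ 0 t * ∏ i : Fin (n + 1), Φ i.succ (y i) := by
        rw [Fin.prod_univ_succ]
        refine congrArg₂ _ rfl (Finset.prod_congr rfl fun i _ => ?_)
        rw [Fin.cons_succ]
      rw [e1, e2, e3]
      ring
    have hf : Measurable (fun t : β => ρ t * Φ 0 t * q 0 t (y 0)) := by
      refine Measurable.mul (hρ.mul (hΦ 0)) ?_
      show Measurable (Function.uncurry (q 0) ∘ fun t : β => (t, y 0))
      exact (hq 0).comp (measurable_id.prodMk measurable_const)
    rw [lintegral_congr hpt, lintegral_mul_const _ hf]
    ring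
  exact key

end MarkovCollapse

section Ratio

variable {β : Type*} [MeasurableSpace β] {m : ℕ}

lemma good_algebra (a b : Fin m → ℝ≥0∞)
    (h : ∀ i, 0 < a i ∧ a i < ⊤ ∧ 0 < b i ∧ b i < ⊤) :
    (∏ i, b i) = (∏ i, a i) *
      ENNReal.ofReal (Real.exp (∑ i, (Real.log (b i).toReal - Real.log (a i).toReal))) := by
  rw [Real.exp_sum, ENNReal.ofReal_prod_of_nonneg (fun i _ => (Real.exp_pos _).le),
    ← Finset.prod_mul_distrib]
  refine Finset.prod_congr rfl fun i _ => ?_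
  obtain ⟨ha0, hat, hb0, hbt⟩ := h i
  rw [Real.exp_sub, Real.exp_log (ENNReal.toReal_pos hb0.ne' hbt.ne),
    Real.exp_log (ENNReal.toReal_pos ha0.ne' hat.ne),
    ENNReal.ofReal_div_of_pos (ENNReal.toReal_pos ha0.ne' hat.ne),
    ENNReal.ofReal_toReal hbt.ne, ENNReal.ofReal_toReal hat.ne,
    ENNReal.mul_div_cancel ha0.ne' hat.ne]

/-- The density of `P'` with respect to `P` is the exponential of the sum of log-ratios,
`Q`-a.e. -/
lemma ratio_lemma (Ψ Ψ' : Fin m → β → ℝ≥0∞)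
    (hΨ : ∀ i, Measurable (Ψ i)) (hΨ' : ∀ i, Measurable (Ψ' i))
    (Q P P' : Measure (Fin m → β))
    [IsProbabilityMeasure P] [IsProbabilityMeasure P']
    (hP : P = Q.withDensity (fun x => ∏ i, Ψ i (x i)))
    (hP' : P' = Q.withDensity (fun x => ∏ i, Ψ' i (x i)))
    (hmarg : ∀ i, P.map (fun x => x i) = P'.map (fun x => x i)) :
    P' = P.withDensity (fun x => ENNReal.ofReal (Real.exp
      (∑ i, (Real.log ((Ψ' i (x i)).toReal) - Real.log ((Ψ i (x i)).toReal))))) := by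
  classical
  set F : (Fin m → β) → ℝ≥0∞ := fun x => ∏ i, Ψ i (x i) with hF
  set F' : (Fin m → β) → ℝ≥0∞ := fun x => ∏ i, Ψ' i (x i) with hF'
  have hFmeas : Measurable F := Finset.measurable_prod _ fun i _ => by
    show Measurable (Ψ i ∘ fun x : Fin m → β => x i)
    exact (hΨ i).comp (measurable_pi_apply _)
  have hF'meas : Measurable F' := Finset.measurable_prod _ fun i _ => by
    show Measurable (Ψ' i ∘ fun x : Fin m → β => x i)
    exact (hΨ' i).comp (measurable_pi_apply _)
  have mtrans : ∀ (i : Fin m) (s : Set β), MeasurableSet s →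
      P ((fun x : Fin m → β => x i) ⁻¹' s) = P' ((fun x : Fin m → β => x i) ⁻¹' s) := by
    intro i s hs
    rw [← Measure.map_apply (measurable_pi_apply i) hs,
      ← Measure.map_apply (measurable_pi_apply i) hs, hmarg i]
  -- generic claims
  have claimA : ∀ (S : Set (Fin m → β)), MeasurableSet S → P S = 0 →
      (∀ᵐ x ∂Q, x ∈ S → F x = 0) := by
    intro S hS h0
    rw [hP, withDensity_apply _ hS] at h0
    exact (setLIntegral_eq_zero_iff hS hFmeas).1 h0
  have claimA' : ∀ (S : Set (Fin m → β)), MeasurableSet S → P' S = 0 →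
      (∀ᵐ x ∂Q, x ∈ S → F' x = 0) := by
    intro S hS h0
    rw [hP', withDensity_apply _ hS] at h0
    exact (setLIntegral_eq_zero_iff hS hF'meas).1 h0
  -- the "infinite-value" claim, for a generic product
  have claimC : ∀ (G : Fin m → β → ℝ≥0∞) (hG : ∀ i, Measurable (G i))
      (R : Measure (Fin m → β)) (hRprob : IsProbabilityMeasure R)
      (hR : R = Q.withDensity (fun x => ∏ i, G i (x i))) (i : Fin m),
      R ((fun x : Fin m → β => x i) ⁻¹' {a | G i a = ⊤}) = 0 := by
    intro G hG R hRprob hR i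
    set GG : (Fin m → β) → ℝ≥0∞ := fun x => ∏ j, G j (x j) with hGG
    have hGGmeas : Measurable GG := Finset.measurable_prod _ fun j _ => by
      show Measurable (G j ∘ fun x : Fin m → β => x j)
      exact (hG j).comp (measurable_pi_apply _)
    have hsTm : MeasurableSet {a : β | G i a = ⊤} := by
      exact (hG i) (measurableSet_singleton ⊤)
    set S : Set (Fin m → β) := (fun x : Fin m → β => x i) ⁻¹' {a | G i a = ⊤} with hSdef
    have hSm : MeasurableSet S := (measurable_pi_apply i) hsTm
    -- pointwise on S, GG ∈ {0, ⊤}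
    have hpt : ∀ x ∈ S, GG x = 0 ∨ GG x = ⊤ := by
      intro x hx
      have hxi : G i (x i) = ⊤ := hx
      have hsplit : GG x = G i (x i) * ∏ j ∈ Finset.univ.erase i, G j (x j) :=
        (Finset.mul_prod_erase Finset.univ _ (Finset.mem_univ i)).symm
      rcases eq_or_ne (∏ j ∈ Finset.univ.erase i, G j (x j)) 0 with h | h
      · left; rw [hsplit, h, mul_zero]
      · right; rw [hsplit, hxi, ENNReal.top_mul h]
    -- the part where GG = ⊤ is Q-null
    have hTm : MeasurableSet {x : Fin m → β | GG x = ⊤} := by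
      exact hGGmeas (measurableSet_singleton ⊤)
    have hQnull : Q (S ∩ {x | GG x = ⊤}) = 0 := by
      by_contra hne
      have hsub : ∫⁻ x in S ∩ {x | GG x = ⊤}, GG x ∂Q ≤ R S := by
        rw [hR, withDensity_apply _ hSm]
        exact lintegral_mono_set Set.inter_subset_left
      have htop : ∫⁻ x in S ∩ {x | GG x = ⊤}, GG x ∂Q = ⊤ := by
        rw [setLIntegral_congr_fun (hSm.inter hTm)
          (fun x hx => (hx.2 : GG x = ⊤)), setLIntegral_const,
          ENNReal.top_mul hne]
      rw [htop] at hsub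
      exact (measure_ne_top R S) (top_le_iff.1 hsub)
    -- hence GG = 0 a.e. on S and R S = 0
    have hae0 : ∀ᵐ x ∂Q, x ∈ S → GG x = 0 := by
      have hnm : ∀ᵐ x ∂Q, x ∉ S ∩ {x | GG x = ⊤} := by
        rw [ae_iff]; simp only [not_not]; exact hQnull
      filter_upwards [hnm] with x hx hxS
      rcases hpt x hxS with h | h
      · exact h
      · exact absurd ⟨hxS, h⟩ hx
    rw [hR, withDensity_apply _ hSm,
      setLIntegral_congr_fun_ae hSm hae0, lintegral_zero]
  -- per-coordinate bad-case claims
  have hbad : ∀ᵐ x ∂Q, ∀ i : Fin m,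
      ((Ψ i (x i) = 0 ∨ Ψ i (x i) = ⊤ ∨ Ψ' i (x i) = 0 ∨ Ψ' i (x i) = ⊤) →
        (F x = 0 ∧ F' x = 0)) := by
    rw [ae_all_iff]
    intro i
    have hs0 : MeasurableSet {a : β | Ψ i a = 0} := by
      exact (hΨ i) (measurableSet_singleton 0)
    have hs0' : MeasurableSet {a : β | Ψ' i a = 0} := by
      exact (hΨ' i) (measurableSet_singleton 0)
    have hsT : MeasurableSet {a : β | Ψ i a = ⊤} := by
      exact (hΨ i) (measurableSet_singleton ⊤)
    have hsT' : MeasurableSet {a : β | Ψ' i a = ⊤} := by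
      exact (hΨ' i) (measurableSet_singleton ⊤)
    -- case Z : Ψ i = 0
    have hZm : MeasurableSet ((fun x : Fin m → β => x i) ⁻¹' {a | Ψ i a = 0}) :=
      (measurable_pi_apply i) hs0
    have hZP : P ((fun x : Fin m → β => x i) ⁻¹' {a | Ψ i a = 0}) = 0 := by
      have hzero : ∀ x ∈ (fun x : Fin m → β => x i) ⁻¹' {a | Ψ i a = 0}, F x = 0 := fun x hx =>
        Finset.prod_eq_zero (Finset.mem_univ i) (show Ψ i (x i) = 0 from hx)
      rw [hP, withDensity_apply _ hZm,
        setLIntegral_congr_fun hZm hzero, lintegral_zero]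
    have cZ' : ∀ᵐ x ∂Q, Ψ i (x i) = 0 → F' x = 0 := by
      have := claimA' _ hZm (by rw [← mtrans i _ hs0]; exact hZP)
      filter_upwards [this] with x hx h; exact hx h
    -- case Z' : Ψ' i = 0
    have hZ'm : MeasurableSet ((fun x : Fin m → β => x i) ⁻¹' {a | Ψ' i a = 0}) :=
      (measurable_pi_apply i) hs0'
    have hZ'P' : P' ((fun x : Fin m → β => x i) ⁻¹' {a | Ψ' i a = 0}) = 0 := by
      have hzero : ∀ x ∈ (fun x : Fin m → β => x i) ⁻¹' {a | Ψ' i a = 0}, F' x = 0 := fun x hx =>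
        Finset.prod_eq_zero (Finset.mem_univ i) (show Ψ' i (x i) = 0 from hx)
      rw [hP', withDensity_apply _ hZ'm,
        setLIntegral_congr_fun hZ'm hzero, lintegral_zero]
    have cZ : ∀ᵐ x ∂Q, Ψ' i (x i) = 0 → F x = 0 := by
      have := claimA _ hZ'm (by rw [mtrans i _ hs0']; exact hZ'P')
      filter_upwards [this] with x hx h; exact hx h
    -- case I : Ψ i = ⊤
    have hIP : P ((fun x : Fin m → β => x i) ⁻¹' {a | Ψ i a = ⊤}) = 0 :=
      claimC Ψ hΨ P ‹_› hP i
    have hIm : MeasurableSet ((fun x : Fin m → β => x i) ⁻¹' {a | Ψ i a = ⊤}) :=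
      (measurable_pi_apply i) hsT
    have cI : ∀ᵐ x ∂Q, Ψ i (x i) = ⊤ → F x = 0 := by
      have := claimA _ hIm hIP
      filter_upwards [this] with x hx h; exact hx h
    have cI' : ∀ᵐ x ∂Q, Ψ i (x i) = ⊤ → F' x = 0 := by
      have := claimA' _ hIm (by rw [← mtrans i _ hsT]; exact hIP)
      filter_upwards [this] with x hx h; exact hx h
    -- case I' : Ψ' i = ⊤
    have hI'P' : P' ((fun x : Fin m → β => x i) ⁻¹' {a | Ψ' i a = ⊤}) = 0 :=
      claimC Ψ' hΨ' P' ‹_› hP' i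
    have hI'm : MeasurableSet ((fun x : Fin m → β => x i) ⁻¹' {a | Ψ' i a = ⊤}) :=
      (measurable_pi_apply i) hsT'
    have cI'2 : ∀ᵐ x ∂Q, Ψ' i (x i) = ⊤ → F' x = 0 := by
      have := claimA' _ hI'm hI'P'
      filter_upwards [this] with x hx h; exact hx h
    have cI'1 : ∀ᵐ x ∂Q, Ψ' i (x i) = ⊤ → F x = 0 := by
      have := claimA _ hI'm (by rw [mtrans i _ hsT']; exact hI'P')
      filter_upwards [this] with x hx h; exact hx h
    -- also the trivial pointwise parts
    filter_upwards [cZ', cZ, cI, cI', cI'2, cI'1] with x h1 h2 h3 h4 h5 h6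
    rintro (h | h | h | h)
    · exact ⟨Finset.prod_eq_zero (Finset.mem_univ i) h, h1 h⟩
    · exact ⟨h3 h, h4 h⟩
    · exact ⟨h2 h, Finset.prod_eq_zero (Finset.mem_univ i) h⟩
    · exact ⟨h6 h, h5 h⟩
  -- assemble the a.e. identity
  set E : (Fin m → β) → ℝ≥0∞ := fun x => ENNReal.ofReal (Real.exp
      (∑ i, (Real.log ((Ψ' i (x i)).toReal) - Real.log ((Ψ i (x i)).toReal)))) with hE
  have hae : ∀ᵐ x ∂Q, F' x = F x * E x := by
    filter_upwards [hbad] with x hx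
    by_cases hgood : ∀ i, 0 < Ψ i (x i) ∧ Ψ i (x i) < ⊤ ∧ 0 < Ψ' i (x i) ∧ Ψ' i (x i) < ⊤
    · exact good_algebra (fun i => Ψ i (x i)) (fun i => Ψ' i (x i)) hgood
    · obtain ⟨i, hi⟩ := not_forall.1 hgood
      have hdisj : Ψ i (x i) = 0 ∨ Ψ i (x i) = ⊤ ∨ Ψ' i (x i) = 0 ∨ Ψ' i (x i) = ⊤ := by
        by_cases h1 : Ψ i (x i) = 0
        · exact Or.inl h1
        by_cases h2 : Ψ i (x i) = ⊤
        · exact Or.inr (Or.inl h2)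
        by_cases h3 : Ψ' i (x i) = 0
        · exact Or.inr (Or.inr (Or.inl h3))
        refine Or.inr (Or.inr (Or.inr ?_))
        by_contra h4
        exact hi ⟨pos_iff_ne_zero.2 h1, lt_top_iff_ne_top.2 h2, pos_iff_ne_zero.2 h3,
          lt_top_iff_ne_top.2 h4⟩
      obtain ⟨hF0, hF'0⟩ := hx i hdisj
      rw [hF'0, hF0, zero_mul]
  -- conclude
  have hmeasE : Measurable E := by
    rw [hE]
    apply Measurable.ennreal_ofReal
    apply Measurable.exp
    apply Finset.measurable_sum
    intro i _
    apply Measurable.sub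
    · exact (Real.measurable_log.comp ((hΨ' i).ennreal_toReal.comp (measurable_pi_apply i)))
    · exact (Real.measurable_log.comp ((hΨ i).ennreal_toReal.comp (measurable_pi_apply i)))
  rw [hP', withDensity_congr_ae hae, show (fun x => F x * E x) = F * E from rfl,
    withDensity_mul _ hFmeas hmeasE, ← hP]

end Ratio


section Aux

variable {β : Type*} [MeasureSpace β] [SigmaFinite (volume : Measure β)]

/-- Helper: composing two `withDensity`s. -/
lemma wd_comp {α : Type*} [MeasurableSpace α] (μ : Measure α) {f g : α → ℝ≥0∞} (hf : Measurable f) (hg : Measurable g) :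
    (μ.withDensity f).withDensity g = μ.withDensity (fun x => f x * g x) :=
  (withDensity_mul μ hf hg).symm

theorem aux_uniqueness :
    ∀ (n : ℕ) (ρ : β → ℝ≥0∞) (q : Fin n → β → β → ℝ≥0∞),
      Measurable ρ → (∀ i, Measurable (Function.uncurry (q i))) →
      (∀ a, 0 < ρ a) → (∀ i a b, 0 < q i a b) →
      ∀ Q : Measure (Fin (n + 1) → β),
        Q = volume.withDensity
          (fun x => ρ (x 0) * ∏ i : Fin n, q i (x i.castSucc) (x i.succ)) →
        IsProbabilityMeasure Q →
      ∀ Ψ Ψ' : Fin (n + 1) → β → ℝ≥0∞,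
        (∀ i, Measurable (Ψ i)) → (∀ i, Measurable (Ψ' i)) →
      ∀ P P' : Measure (Fin (n + 1) → β),
        IsProbabilityMeasure P → IsProbabilityMeasure P' →
        P = Q.withDensity (fun x => ∏ i, Ψ i (x i)) →
        P' = Q.withDensity (fun x => ∏ i, Ψ' i (x i)) →
        (∀ i, P.map (fun x => x i) = P'.map (fun x => x i)) →
        P = P' := by
  intro n
  induction n with
  | zero =>
    intro ρ q hρ hq hρpos hqpos Q hQ hQprob Ψ Ψ' hΨ hΨ' P P' hPprob hP'prob hP hP' hmarg
    set e := MeasurableEquiv.funUnique (Fin 1) β with he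
    have hcoe : (⇑e) = fun x : Fin 1 → β => x 0 := rfl
    calc P = (P.map e).map e.symm := (MeasurableEquiv.map_symm_map e ▸ rfl : P = (P.map e).map e.symm)
      _ = (P'.map e).map e.symm := by rw [hcoe, hmarg 0]
      _ = P' := MeasurableEquiv.map_symm_map e
  | succ n IH =>
    intro ρ q hρ hq hρpos hqpos Q hQ hQprob Ψ Ψ' hΨ hΨ' P P' hPprob hP'prob hP hP' hmarg
    -- collapsed data
    set ρt : β → ℝ≥0∞ := fun a => ∫⁻ t, ρ t * q 0 t a with hρt_def
    set g : β → ℝ≥0∞ := fun a => ∫⁻ t, ρ t * Ψ 0 t * q 0 t a with hg_def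
    set g' : β → ℝ≥0∞ := fun a => ∫⁻ t, ρ t * Ψ' 0 t * q 0 t a with hg'_def
    have hρt : Measurable ρt := by
      refine Measurable.lintegral_prod_right' (f := fun p : β × β => ρ p.2 * q 0 p.2 p.1) ?_
      exact (hρ.comp measurable_snd).mul
        ((hq 0).comp (measurable_snd.prodMk measurable_fst))
    have hg : Measurable g := by
      refine Measurable.lintegral_prod_right' (f := fun p : β × β => ρ p.2 * Ψ 0 p.2 * q 0 p.2 p.1) ?_
      exact ((hρ.comp measurable_snd).mul ((hΨ 0).comp measurable_snd)).mul
        ((hq 0).comp (measurable_snd.prodMk measurable_fst))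
    have hg' : Measurable g' := by
      refine Measurable.lintegral_prod_right' (f := fun p : β × β => ρ p.2 * Ψ' 0 p.2 * q 0 p.2 p.1) ?_
      exact ((hρ.comp measurable_snd).mul ((hΨ' 0).comp measurable_snd)).mul
        ((hq 0).comp (measurable_snd.prodMk measurable_fst))
    -- volume β is nonzero
    have hvolβ : (volume : Measure β) ≠ 0 := by
      intro h0
      have hzero : (volume : Measure (Fin (n + 2) → β)) = 0 := by
        rw [← Measure.measure_univ_eq_zero, volume_pi, Measure.pi_univ]
        rw [Finset.prod_eq_zero (Finset.mem_univ 0)]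
        rw [h0]; rfl
      have hQuniv : Q Set.univ = 1 := measure_univ
      rw [hQ, hzero] at hQuniv
      rw [withDensity_apply _ MeasurableSet.univ] at hQuniv
      simp at hQuniv
    have hvolβpos : 0 < (volume : Measure β) Set.univ := Measure.measure_univ_pos.2 hvolβ
    -- positivity of collapsed initial density
    have hρtpos : ∀ a, 0 < ρt a := by
      intro a
      show 0 < ∫⁻ t, ρ t * q 0 t a
      have hm : Measurable (fun t : β => ρ t * q 0 t a) := by
        refine hρ.mul ?_
        show Measurable (Function.uncurry (q 0) ∘ fun t : β => (t, a))
        exact (hq 0).comp (measurable_id.prodMk measurable_const)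
      rw [lintegral_pos_iff_support hm]
      have hsupp : Function.support (fun t => ρ t * q 0 t a) = Set.univ := by
        ext t
        simp only [Function.mem_support, Set.mem_univ, iff_true]
        exact mul_ne_zero (hρpos t).ne' (hqpos 0 t a).ne'
      rw [hsupp]
      exact hvolβpos
    -- collapsed Q
    have hQt : Q.map (res n β) = volume.withDensity
        (fun y => ρt (y 0) * ∏ i : Fin n, q i.succ (y i.castSucc) (y i.succ)) := by
      have h1 := collapse_density (β := β) ρ q (fun _ _ => (1 : ℝ≥0∞)) hρ hq
        (fun _ => measurable_const)
      simp only [one_mul, mul_one, Finset.prod_const_one] at h1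
      rw [hQ]
      exact h1
    -- measurability helpers
    have hDQ : Measurable (fun x : Fin (n + 2) → β =>
        ρ (x 0) * ∏ i : Fin (n + 1), q i (x i.castSucc) (x i.succ)) := by
      refine (hρ.comp (measurable_pi_apply 0)).mul ?_
      refine Finset.measurable_prod _ fun i _ => ?_
      show Measurable (Function.uncurry (q i) ∘ fun x : Fin (n + 2) → β => (x i.castSucc, x i.succ))
      exact (hq i).comp ((measurable_pi_apply _).prodMk (measurable_pi_apply _))
    have hprodΨ : Measurable (fun x : Fin (n + 2) → β => ∏ i, Ψ i (x i)) :=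
      Finset.measurable_prod _ fun i _ => by
        show Measurable (Ψ i ∘ fun x : Fin (n + 2) → β => x i)
        exact (hΨ i).comp (measurable_pi_apply _)
    have hprodΨ' : Measurable (fun x : Fin (n + 2) → β => ∏ i, Ψ' i (x i)) :=
      Finset.measurable_prod _ fun i _ => by
        show Measurable (Ψ' i ∘ fun x : Fin (n + 2) → β => x i)
        exact (hΨ' i).comp (measurable_pi_apply _)
    -- collapsed P and P'
    have hPbig : P = volume.withDensity
        (fun x : Fin (n + 2) → β =>
          (ρ (x 0) * ∏ i : Fin (n + 1), q i (x i.castSucc) (x i.succ)) * ∏ i, Ψ i (x i)) := by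
      rw [hP, hQ, wd_comp _ hDQ hprodΨ]
    have hP'big : P' = volume.withDensity
        (fun x : Fin (n + 2) → β =>
          (ρ (x 0) * ∏ i : Fin (n + 1), q i (x i.castSucc) (x i.succ)) * ∏ i, Ψ' i (x i)) := by
      rw [hP', hQ, wd_comp _ hDQ hprodΨ']
    have hPt : P.map (res n β) = volume.withDensity
        (fun y => (g (y 0) * ∏ i : Fin n, q i.succ (y i.castSucc) (y i.succ))
          * ∏ i : Fin (n + 1), Ψ i.succ (y i)) := by
      rw [hPbig, collapse_density ρ q Ψ hρ hq hΨ]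
    have hP't : P'.map (res n β) = volume.withDensity
        (fun y => (g' (y 0) * ∏ i : Fin n, q i.succ (y i.castSucc) (y i.succ))
          * ∏ i : Fin (n + 1), Ψ' i.succ (y i)) := by
      rw [hP'big, collapse_density ρ q Ψ' hρ hq hΨ']
    -- probability instances for collapsed measures
    have hQtprob : IsProbabilityMeasure (Q.map (res n β)) :=
      Measure.isProbabilityMeasure_map (measurable_res).aemeasurable
    have hPtprob : IsProbabilityMeasure (P.map (res n β)) :=
      Measure.isProbabilityMeasure_map (measurable_res).aemeasurable
    have hP'tprob : IsProbabilityMeasure (P'.map (res n β)) :=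
      Measure.isProbabilityMeasure_map (measurable_res).aemeasurable
    -- a.e. finiteness of ρt
    have hqtprodpos : ∀ y : Fin (n + 1) → β,
        (∏ i : Fin n, q i.succ (y i.castSucc) (y i.succ)) ≠ 0 := by
      intro y
      rw [Finset.prod_ne_zero_iff]
      exact fun i _ => (hqpos i.succ _ _).ne'
    have hfin : ∀ᵐ y ∂(volume : Measure (Fin (n + 1) → β)), ρt (y 0) ≠ ⊤ := by
      have hcomp : Measurable (fun y : Fin (n + 1) → β => ρt (y 0)) :=
        hρt.comp (measurable_pi_apply 0)
      have hNm : MeasurableSet {y : Fin (n + 1) → β | ρt (y 0) = ⊤} :=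
        hcomp (measurableSet_singleton ⊤)
      have hnull : (volume : Measure (Fin (n + 1) → β)) {y | ρt (y 0) = ⊤} = 0 := by
        by_contra hne
        have htop : (Q.map (res n β)) {y | ρt (y 0) = ⊤} = ⊤ := by
          rw [hQt, withDensity_apply _ hNm]
          rw [setLIntegral_congr_fun hNm (fun y hy => ?_),
            setLIntegral_const, ENNReal.top_mul hne]
          show ρt (y 0) * (∏ i : Fin n, q i.succ (y i.castSucc) (y i.succ)) = ⊤
          rw [(hy : ρt (y 0) = ⊤), ENNReal.top_mul (hqtprodpos y)]
        exact (measure_ne_top _ _) htop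
      rw [ae_iff]
      simpa using hnull
    -- the collapsed potentials
    set Ψt : Fin (n + 1) → β → ℝ≥0∞ :=
      Fin.cons (fun a => Ψ 1 a * (g a / ρt a)) (fun i a => Ψ i.succ.succ a) with hΨt_def
    set Ψ't : Fin (n + 1) → β → ℝ≥0∞ :=
      Fin.cons (fun a => Ψ' 1 a * (g' a / ρt a)) (fun i a => Ψ' i.succ.succ a) with hΨ't_def
    have hΨtm : ∀ j, Measurable (Ψt j) := by
      intro j
      refine Fin.cases ?_ ?_ j
      · rw [hΨt_def]
        simp only [Fin.cons_zero]
        exact (hΨ 1).mul (hg.div hρt)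
      · intro i
        rw [hΨt_def]
        simp only [Fin.cons_succ]
        exact hΨ i.succ.succ
    have hΨ'tm : ∀ j, Measurable (Ψ't j) := by
      intro j
      refine Fin.cases ?_ ?_ j
      · rw [hΨ't_def]
        simp only [Fin.cons_zero]
        exact (hΨ' 1).mul (hg'.div hρt)
      · intro i
        rw [hΨ't_def]
        simp only [Fin.cons_succ]
        exact hΨ' i.succ.succ
    -- identification of collapsed P with the tilted collapsed Q
    have hkey : ∀ (G : β → ℝ≥0∞) (Φ : Fin (n + 2) → β → ℝ≥0∞),
        (∀ᵐ y ∂(volume : Measure (Fin (n + 1) → β)),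
          (ρt (y 0) * ∏ i : Fin n, q i.succ (y i.castSucc) (y i.succ))
            * ∏ j : Fin (n + 1),
              (Fin.cons (fun a => Φ 1 a * (G a / ρt a)) (fun i a => Φ i.succ.succ a) :
                Fin (n + 1) → β → ℝ≥0∞) j (y j)
          = (G (y 0) * ∏ i : Fin n, q i.succ (y i.castSucc) (y i.succ))
            * ∏ i : Fin (n + 1), Φ i.succ (y i)) := by
      intro G Φ
      filter_upwards [hfin] with y hy
      have hsplitΨ : (∏ j : Fin (n + 1),
          (Fin.cons (fun a => Φ 1 a * (G a / ρt a)) (fun i a => Φ i.succ.succ a) :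
            Fin (n + 1) → β → ℝ≥0∞) j (y j))
          = (Φ 1 (y 0) * (G (y 0) / ρt (y 0))) * ∏ i : Fin n, Φ i.succ.succ (y i.succ) := by
        rw [Fin.prod_univ_succ]
        simp only [Fin.cons_zero, Fin.cons_succ]
      have hsplitΦ : (∏ i : Fin (n + 1), Φ i.succ (y i))
          = Φ 1 (y 0) * ∏ i : Fin n, Φ i.succ.succ (y i.succ) := by
        rw [Fin.prod_univ_succ, Fin.succ_zero_eq_one]
      rw [hsplitΨ, hsplitΦ]
      have hc : ρt (y 0) * (G (y 0) / ρt (y 0)) = G (y 0) :=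
        ENNReal.mul_div_cancel (hρtpos (y 0)).ne' hy
      calc (ρt (y 0) * ∏ i : Fin n, q i.succ (y i.castSucc) (y i.succ))
            * ((Φ 1 (y 0) * (G (y 0) / ρt (y 0))) * ∏ i : Fin n, Φ i.succ.succ (y i.succ))
          = (ρt (y 0) * (G (y 0) / ρt (y 0)))
            * ((∏ i : Fin n, q i.succ (y i.castSucc) (y i.succ))
              * (Φ 1 (y 0) * ∏ i : Fin n, Φ i.succ.succ (y i.succ))) := by ring
        _ = (G (y 0) * ∏ i : Fin n, q i.succ (y i.castSucc) (y i.succ))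
            * (Φ 1 (y 0) * ∏ i : Fin n, Φ i.succ.succ (y i.succ)) := by rw [hc]; ring
    have hρtq : Measurable (fun y : Fin (n + 1) → β =>
        ρt (y 0) * ∏ i : Fin n, q i.succ (y i.castSucc) (y i.succ)) := by
      refine (hρt.comp (measurable_pi_apply 0)).mul ?_
      refine Finset.measurable_prod _ fun i _ => ?_
      show Measurable (Function.uncurry (q i.succ) ∘
        fun y : Fin (n + 1) → β => (y i.castSucc, y i.succ))
      exact (hq i.succ).comp ((measurable_pi_apply _).prodMk (measurable_pi_apply _))
    have hPt2 : P.map (res n β) = (Q.map (res n β)).withDensity (fun y => ∏ j, Ψt j (y j)) := by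
      rw [hQt, wd_comp _ hρtq (Finset.measurable_prod _ fun j _ => by
        show Measurable (Ψt j ∘ fun y : Fin (n + 1) → β => y j)
        exact (hΨtm j).comp (measurable_pi_apply _)), hPt]
      exact (withDensity_congr_ae (hkey g Ψ)).symm
    have hP't2 : P'.map (res n β) = (Q.map (res n β)).withDensity (fun y => ∏ j, Ψ't j (y j)) := by
      rw [hQt, wd_comp _ hρtq (Finset.measurable_prod _ fun j _ => by
        show Measurable (Ψ't j ∘ fun y : Fin (n + 1) → β => y j)
        exact (hΨ'tm j).comp (measurable_pi_apply _)), hP't]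
      exact (withDensity_congr_ae (hkey g' Ψ')).symm
    -- marginals of the collapsed measures
    have hmargt : ∀ j : Fin (n + 1), (P.map (res n β)).map (fun y => y j)
        = (P'.map (res n β)).map (fun y => y j) := by
      intro j
      rw [Measure.map_map (measurable_pi_apply j) measurable_res,
        Measure.map_map (measurable_pi_apply j) measurable_res]
      exact hmarg j.succ
    -- apply the induction hypothesis
    have hcollapsed : P.map (res n β) = P'.map (res n β) :=
      IH (fun a => ρt a) (fun i => q i.succ) hρt (fun i => hq i.succ) hρtpos
        (fun i a b => hqpos i.succ a b) (Q.map (res n β)) hQt hQtprob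
        Ψt Ψ't hΨtm hΨ'tm (P.map (res n β)) (P'.map (res n β)) hPtprob hP'tprob
        hPt2 hP't2 hmargt
    -- apply the core lemma
    set ξ : (Fin (n + 2) → β) → ℝ :=
      fun x => Real.log ((Ψ' 0 (x 0)).toReal) - Real.log ((Ψ 0 (x 0)).toReal) with hξ_def
    set η : (Fin (n + 2) → β) → ℝ :=
      fun x => ∑ i : Fin (n + 1),
        (Real.log ((Ψ' i.succ (x i.succ)).toReal) - Real.log ((Ψ i.succ (x i.succ)).toReal))
      with hη_def
    have hr : ∀ i : Fin (n + 2), Measurable (fun a : β =>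
        Real.log ((Ψ' i a).toReal) - Real.log ((Ψ i a).toReal)) := fun i =>
      (Real.measurable_log.comp (hΨ' i).ennreal_toReal).sub
        (Real.measurable_log.comp (hΨ i).ennreal_toReal)
    have hξm : Measurable ξ := (hr 0).comp (measurable_pi_apply 0)
    have hηm : Measurable η := by
      rw [hη_def]
      refine Finset.measurable_sum _ fun i _ => ?_
      exact (hr i.succ).comp (measurable_pi_apply i.succ)
    have hd : P' = P.withDensity fun x => ENNReal.ofReal (Real.exp (ξ x + η x)) := by
      rw [ratio_lemma Ψ Ψ' hΨ hΨ' Q P P' hP hP' hmarg]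
      congr 1
      funext x
      rw [hξ_def, hη_def]
      congr 2
      exact Fin.sum_univ_succ _
    have hmξ : ∀ c : ℝ, P' {x | c < ξ x} = P {x | c < ξ x} := by
      intro c
      have hsm : MeasurableSet {a : β | c < Real.log ((Ψ' 0 a).toReal)
          - Real.log ((Ψ 0 a).toReal)} := measurableSet_lt measurable_const (hr 0)
      have : {x : Fin (n + 2) → β | c < ξ x} = (fun x : Fin (n + 2) → β => x 0) ⁻¹'
          {a | c < Real.log ((Ψ' 0 a).toReal) - Real.log ((Ψ 0 a).toReal)} := rfl
      rw [this, ← Measure.map_apply (measurable_pi_apply 0) hsm,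
        ← Measure.map_apply (measurable_pi_apply 0) hsm, hmarg 0]
    have hmη : ∀ c : ℝ, P' {x | c < η x} = P {x | c < η x} := by
      intro c
      have hsm : MeasurableSet {y : Fin (n + 1) → β | c < ∑ i : Fin (n + 1),
          (Real.log ((Ψ' i.succ (y i)).toReal) - Real.log ((Ψ i.succ (y i)).toReal))} := by
        refine measurableSet_lt measurable_const ?_
        refine Finset.measurable_sum _ fun i _ => ?_
        exact (hr i.succ).comp (measurable_pi_apply i)
      have hset : {x : Fin (n + 2) → β | c < η x} = (res n β) ⁻¹'
          {y | c < ∑ i : Fin (n + 1),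
            (Real.log ((Ψ' i.succ (y i)).toReal) - Real.log ((Ψ i.succ (y i)).toReal))} := rfl
      rw [hset, ← Measure.map_apply measurable_res hsm,
        ← Measure.map_apply measurable_res hsm, hcollapsed]
    exact core_lemma hξm hηm hd hmξ hmη

end Aux

/-- **Uniqueness in the multi-marginal Schrödinger system.** Let `Q` be a probability measure
on `(ℝ^d)^(k+1)` with strictly positive Markov-chain-form density
`ρ0 (x 0) * ∏ i, q i (x i) (x (i+1))` w.r.t. Lebesgue measure. If `P` and `P'` are two
probability measures obtained from `Q` by reweighting with products of one-coordinate
potentials, have the same marginals, and have finite relative entropy w.r.t. `Q`,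
then `P = P'`. -/
theorem multimarginal_schroedinger_uniqueness (d k : ℕ)
    (ρ0 : (Fin d → ℝ) → ℝ≥0∞) (q : Fin k → (Fin d → ℝ) → (Fin d → ℝ) → ℝ≥0∞)
    (hρ0 : Measurable ρ0) (hq : ∀ i, Measurable (Function.uncurry (q i)))
    (hρ0pos : ∀ a, 0 < ρ0 a) (hqpos : ∀ i a b, 0 < q i a b)
    (Q : Measure (Fin (k + 1) → Fin d → ℝ))
    (hQ : Q = volume.withDensity
      (fun x => ρ0 (x 0) * ∏ i : Fin k, q i (x i.castSucc) (x i.succ)))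
    [IsProbabilityMeasure Q]
    (Ψ Ψ' : Fin (k + 1) → (Fin d → ℝ) → ℝ≥0∞)
    (hΨ : ∀ i, Measurable (Ψ i)) (hΨ' : ∀ i, Measurable (Ψ' i))
    (P P' : Measure (Fin (k + 1) → Fin d → ℝ))
    [IsProbabilityMeasure P] [IsProbabilityMeasure P']
    (hP : P = Q.withDensity (fun x => ∏ i, Ψ i (x i)))
    (hP' : P' = Q.withDensity (fun x => ∏ i, Ψ' i (x i)))
    (hmarg : ∀ i, P.map (fun x => x i) = P'.map (fun x => x i))
    (hfinP : klDiv P Q ≠ ⊤) (hfinP' : klDiv P' Q ≠ ⊤) :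
    P = P' := by
  exact aux_uniqueness k ρ0 q hρ0 hq hρ0pos hqpos Q hQ ‹_› Ψ Ψ' hΨ hΨ' P P'
    ‹_› ‹_› hP hP' hmarg
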